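/- Let a countable group G act by homeomorphisms on a compact metric space X, and suppose x_1, ..., x_n ∈ X. Then there exist points y_1, ..., y_k with 1 ≤ k ≤ n and a sequence (g_i) in G such that g_i{x_1,...,x_n} → {y_1,...,y_k} in the Hausdorff metric and y_p, y_q are not proximal for any p ≠ q. -/
import Mathlib


open Filter Metric


lemma myBounded {X : Type*} [MetricSpace X] [CompactSpace X] (s : Set X) :
    Bornology.IsBounded s := isCompact_univ.isBounded.subset (Set.subset_univ s)

lemma myEdistNeTop {X : Type*} [MetricSpace X] [CompactSpace X] {A B : Set X}
    (hA : A.Nonempty) (hB : B.Nonempty) : EMetric.hausdorffEdist A B ≠ ⊤ :=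
  hausdorffEdist_ne_top_of_nonempty_of_bounded hA hB (myBounded A) (myBounded B)

lemma hausRangeLe {X : Type*} [MetricSpace X] {k : ℕ}
    (u v : Fin k → X) {r : ℝ} (hr : 0 ≤ r) (h : ∀ j, dist (u j) (v j) ≤ r) :
    hausdorffDist (Set.range u) (Set.range v) ≤ r := by
  apply hausdorffDist_le_of_mem_dist hr
  · rintro _ ⟨j, rfl⟩; exact ⟨v j, Set.mem_range_self j, h j⟩
  · rintro _ ⟨j, rfl⟩; exact ⟨u j, Set.mem_range_self j, by rw [dist_comm]; exact h j⟩

lemma hausImageLe {X : Type*} [MetricSpace X] [CompactSpace X] {f : X → X}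
    (hf : UniformContinuous f) {ε : ℝ} (hε : 0 < ε) :
    ∃ δ > 0, ∀ A B : Set X, A.Nonempty → B.Nonempty →
      hausdorffDist A B < δ → hausdorffDist (f '' A) (f '' B) ≤ ε := by
  obtain ⟨δ, hδ, hδf⟩ := Metric.uniformContinuous_iff.1 hf ε hε
  refine ⟨δ, hδ, fun A B hA hB hAB => ?_⟩
  have hne := myEdistNeTop hA hB
  apply hausdorffDist_le_of_mem_dist hε.le
  · rintro _ ⟨a, ha, rfl⟩
    obtain ⟨b, hb, hab⟩ := exists_dist_lt_of_hausdorffDist_lt ha hAB hne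
    exact ⟨f b, Set.mem_image_of_mem f hb, (hδf hab).le⟩
  · rintro _ ⟨b, hb, rfl⟩
    obtain ⟨a, ha, hab⟩ := exists_dist_lt_of_hausdorffDist_lt hb
      (by rwa [hausdorffDist_comm]) (by rwa [EMetric.hausdorffEdist_comm])
    exact ⟨f a, Set.mem_image_of_mem f ha, (hδf hab).le⟩


/-- from a finite set of points one can reach, along the action,
a finite set of pairwise non-proximal points (in the Hausdorff metric). -/
theorem stmt13 {X : Type*} [MetricSpace X] [CompactSpace X]
    {G : Type*} [Group G] [Countable G] (φ : G → (X ≃ₜ X))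
    (hφ : ∀ g h : G, ∀ x : X, φ (g * h) x = φ g (φ h x))
    (n : ℕ) (hn : 0 < n) (x : Fin n → X) :
    ∃ (k : ℕ), 1 ≤ k ∧ k ≤ n ∧ ∃ (y : Fin k → X) (g : ℕ → G),
      Function.Injective y ∧
      Tendsto (fun i => hausdorffDist (φ (g i) '' Set.range x) (Set.range y))
        atTop (nhds 0) ∧
      ∀ p q : Fin k, p ≠ q →
        ¬ ∃ h : ℕ → G,
          Tendsto (fun m => dist (φ (h m) (y p)) (φ (h m) (y q))) atTop (nhds 0) := by
  classical
  haveI : Nonempty (Fin n) := ⟨⟨0, hn⟩⟩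
  have hxne : (Set.range x).Nonempty := Set.range_nonempty x
  -- φ 1 = id
  have hφ1 : ∀ a : X, φ 1 a = a := by
    intro a
    have := hφ 1 1 a
    rw [one_mul] at this
    exact ((φ 1).injective this.symm)
  -- enumeration of a finset
  have enum : ∀ (F : Finset X), ∃ y : Fin F.card → X,
      Function.Injective y ∧ Set.range y = ↑F := by
    intro F
    refine ⟨fun i => (F.equivFin.symm i : X), ?_, ?_⟩
    · exact Subtype.val_injective.comp F.equivFin.symm.injective
    · have : (fun i => (F.equivFin.symm i : X)) = Subtype.val ∘ F.equivFin.symm := rfl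
      rw [this, Set.range_comp, Equiv.range_eq_univ, Set.image_univ]
      simp
  -- the key predicate
  set P : ℕ → Prop := fun k => 1 ≤ k ∧ k ≤ n ∧ ∃ y : Fin k → X, Function.Injective y ∧
      ∃ g : ℕ → G, Tendsto (fun i => hausdorffDist (φ (g i) '' Set.range x) (Set.range y))
        atTop (nhds 0) with hP
  -- P holds initially
  have hex : ∃ k, P k := by
    set F := Finset.univ.image x with hF
    obtain ⟨y, hyinj, hyr⟩ := enum F
    refine ⟨F.card, Finset.card_pos.2 (Finset.Nonempty.image ⟨⟨0,hn⟩, Finset.mem_univ _⟩ x),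
      le_trans (Finset.card_image_le) (by simp), y, hyinj, fun _ => 1, ?_⟩
    have heq : ∀ i : ℕ, hausdorffDist (φ (1:G) '' Set.range x) (Set.range y) = 0 := by
      intro i
      have h1 : φ (1:G) '' Set.range x = Set.range x := by
        rw [show ⇑(φ (1:G)) = id from funext hφ1, Set.image_id]
      rw [h1, hyr, hF, Finset.coe_image, Finset.coe_univ, Set.image_univ, hausdorffDist_self_zero]
    exact Tendsto.congr (fun i => (heq i).symm)
      (tendsto_const_nhds : Tendsto (fun _ : ℕ => (0:ℝ)) atTop (nhds 0))
  set k := Nat.find hex with hk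
  obtain ⟨hk1, hkn, y, hyinj, g, hcv⟩ := Nat.find_spec hex
  refine ⟨k, hk1, hkn, y, g, hyinj, hcv, ?_⟩
  -- non-proximality by minimality
  rintro p q hpq ⟨h, hprox⟩
  haveI : Nonempty (Fin k) := ⟨⟨0, hk1⟩⟩
  -- extract pointwise convergent subsequence of m ↦ φ (h m) ∘ y
  obtain ⟨z, -, ψ, hψ, hzcv⟩ := IsCompact.tendsto_subseq (x := fun m (j : Fin k) => φ (h m) (y j))
    (isCompact_univ) (fun m => Set.mem_univ _)
  have hzj : ∀ j : Fin k, Tendsto (fun m => φ (h (ψ m)) (y j)) atTop (nhds (z j)) := by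
    intro j
    exact (tendsto_pi_nhds.1 hzcv) j
  -- z p = z q
  have hzpq : z p = z q := by
    have hd : Tendsto (fun m => dist (φ (h (ψ m)) (y p)) (φ (h (ψ m)) (y q))) atTop (nhds 0) :=
      hprox.comp hψ.tendsto_atTop
    have hd' := (hzj p).dist (hzj q)
    exact dist_eq_zero.1 (tendsto_nhds_unique hd' hd)
  -- the smaller finset
  set F := Finset.univ.image z with hF
  have hFcard : F.card < k := by
    have hsub : F ⊆ (Finset.univ.erase p).image z := by
      intro a ha
      obtain ⟨j, -, rfl⟩ := Finset.mem_image.1 ha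
      rcases eq_or_ne j p with rfl | hj
      · exact Finset.mem_image.2 ⟨q, Finset.mem_erase.2 ⟨(Ne.symm hpq), Finset.mem_univ _⟩, hzpq.symm⟩
      · exact Finset.mem_image.2 ⟨j, Finset.mem_erase.2 ⟨hj, Finset.mem_univ _⟩, rfl⟩
    calc F.card ≤ ((Finset.univ.erase p).image z).card := Finset.card_le_card hsub
      _ ≤ (Finset.univ.erase p).card := Finset.card_image_le
      _ < Finset.univ.card := Finset.card_erase_lt_of_mem (Finset.mem_univ p)
      _ = k := by simp
  obtain ⟨y', hy'inj, hy'r⟩ := enum F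
  have hy'z : Set.range y' = Set.range z := by
    rw [hy'r, hF, Finset.coe_image, Finset.coe_univ, Set.image_univ]
  -- diagonal: build g' with φ (g' m) '' range x → range z
  have key : ∀ m : ℕ, ∃ e : G,
      hausdorffDist (φ e '' Set.range x) (Set.range (fun j => φ (h (ψ m)) (y j)))
        ≤ 1 / (m + 1) := by
    intro m
    have huc : UniformContinuous (φ (h (ψ m))) :=
      CompactSpace.uniformContinuous_of_continuous (φ (h (ψ m))).continuous
    have hm : (0:ℝ) < 1 / (m + 1) := by positivity
    obtain ⟨δ, hδ, hδf⟩ := hausImageLe huc hm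
    obtain ⟨i, hi⟩ := (hcv.eventually (gt_mem_nhds hδ)).exists
    refine ⟨h (ψ m) * g i, ?_⟩
    have himg : φ (h (ψ m) * g i) '' Set.range x
        = φ (h (ψ m)) '' (φ (g i) '' Set.range x) := by
      rw [Set.image_image]
      exact Set.image_congr fun a _ => hφ _ _ a
    have hran : φ (h (ψ m)) '' Set.range y = Set.range (fun j => φ (h (ψ m)) (y j)) := by
      rw [← Set.range_comp]; rfl
    rw [himg, ← hran]
    exact hδf _ _ (hxne.image _) (Set.range_nonempty y) hi
  choose g' hg' using key
  -- the second piece: φ (h (ψ m)) ∘ y → z in Hausdorff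
  set b : ℕ → ℝ := fun m => hausdorffDist (Set.range (fun j => φ (h (ψ m)) (y j))) (Set.range z)
    with hb
  have hbb : ∀ m, b m ≤ ∑ j : Fin k, dist (φ (h (ψ m)) (y j)) (z j) := by
    intro m
    apply hausRangeLe _ _ (Finset.sum_nonneg fun j _ => dist_nonneg)
    intro j
    exact Finset.single_le_sum (f := fun j => dist (φ (h (ψ m)) (y j)) (z j))
      (fun j _ => dist_nonneg) (Finset.mem_univ j)
  have hbcv : Tendsto b atTop (nhds 0) := by
    have hsum : Tendsto (fun m => ∑ j : Fin k, dist (φ (h (ψ m)) (y j)) (z j)) atTop (nhds 0) := by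
      have := tendsto_finset_sum Finset.univ
        (fun j _ => (tendsto_iff_dist_tendsto_zero.1 (hzj j)))
      simpa using this
    exact squeeze_zero (fun m => hausdorffDist_nonneg) hbb hsum
  have hcv' : Tendsto (fun m => hausdorffDist (φ (g' m) '' Set.range x) (Set.range y'))
      atTop (nhds 0) := by
    have hub : ∀ m, hausdorffDist (φ (g' m) '' Set.range x) (Set.range y')
        ≤ 1 / (m + 1) + b m := by
      intro m
      rw [hy'z]
      calc hausdorffDist (φ (g' m) '' Set.range x) (Set.range z)
          ≤ hausdorffDist (φ (g' m) '' Set.range x)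
              (Set.range (fun j => φ (h (ψ m)) (y j))) + b m :=
            hausdorffDist_triangle (myEdistNeTop (hxne.image _) (Set.range_nonempty _))
        _ ≤ 1 / (m + 1) + b m := by linarith [hg' m]
    have hlim : Tendsto (fun m : ℕ => 1 / ((m:ℝ) + 1) + b m) atTop (nhds 0) := by
      have h1 : Tendsto (fun m : ℕ => 1 / ((m:ℝ) + 1)) atTop (nhds 0) :=
        tendsto_one_div_add_atTop_nhds_zero_nat
      simpa using h1.add hbcv
    exact squeeze_zero (fun m => hausdorffDist_nonneg) hub hlim
  -- contradiction with minimality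
  have hPF : P F.card := by
    refine ⟨Finset.card_pos.2 ⟨z p, Finset.mem_image.2 ⟨p, Finset.mem_univ _, rfl⟩⟩,
      le_trans hFcard.le hkn, y', hy'inj, g', hcv'⟩
  exact Nat.find_min hex hFcard hPF
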